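/- Let d, j, h be integers with d > j > 0 and |h| ≥ 3. Then the polynomial f_{d,j,h}(x) = x^d − h x^j + 1 has exactly j complex roots (counted with multiplicity) z in the annulus (2/(3|h|))^{1/j} < |z| < (2/|h|)^{1/j}, and exactly d − j complex roots (counted with multiplicity) z in the annulus (|h|/2)^{1/(d−j)} < |z| < (3|h|/2)^{1/(d−j)}. -/

import Mathlib

open Polynomial

/-- Bridge: the complex absolute value as a bundled absolute value (equal to the norm). -/
noncomputable def Complex.abs : AbsoluteValue ℂ ℝ := NormedField.toAbsoluteValue ℂ

theorem Complex.norm_eq_abs (z : ℂ) : ‖z‖ = Complex.abs z := rfl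

theorem Complex.abs_ofReal (x : ℝ) : Complex.abs (x : ℂ) = |x| := Complex.norm_real x

theorem Complex.abs_cpow_real (x : ℂ) (y : ℝ) :
    Complex.abs (x ^ (y : ℂ)) = Complex.abs x ^ y := Complex.norm_cpow_real x y

theorem Complex.abs_re_le_abs (z : ℂ) : |z.re| ≤ Complex.abs z := Complex.abs_re_le_norm z

namespace TrinomialAux

/-- Elementary: `1 + t ≤ (3/2) * 2^t` for `t ≥ 0`. -/
lemma one_add_le_rpow (t : ℝ) (ht : 0 ≤ t) : 1 + t ≤ 3 / 2 * (2 : ℝ) ^ t := by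
  have h2 : (2 : ℝ) ^ t = Real.exp (t * Real.log 2) := by
    rw [Real.rpow_def_of_pos (by norm_num), mul_comm]
  have he : t * Real.log 2 + 1 ≤ Real.exp (t * Real.log 2) := Real.add_one_le_exp _
  have hl : (0.6931471803 : ℝ) < Real.log 2 := Real.log_two_gt_d9
  rw [h2]
  nlinarith [Real.exp_pos (t * Real.log 2)]

/-- Key inequality: `((j+m)/j)^j ≤ (3/2)^j * 2^m`. -/
lemma key2 (j m : ℕ) (hj : 0 < j) (hm : 0 < m) :
    (((j + m : ℕ) : ℝ) / (j : ℝ)) ^ j ≤ (3 / 2 : ℝ) ^ j * 2 ^ m := by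
  have hj0 : ((j : ℝ)) ≠ 0 := Nat.cast_ne_zero.mpr hj.ne'
  set t : ℝ := (m : ℝ) / (j : ℝ) with ht
  have htn : 0 ≤ t := by positivity
  have h1 : (((j + m : ℕ) : ℝ) / (j : ℝ)) = 3 / 2 * (2 / 3 * (1 + t)) := by
    rw [ht]
    push_cast
    field_simp
  have h2 : 2 / 3 * (1 + t) ≤ (2 : ℝ) ^ t := by
    have := one_add_le_rpow t htn
    linarith
  have h3 : ((2 : ℝ) ^ t) ^ j = 2 ^ m := by
    rw [← Real.rpow_natCast ((2 : ℝ) ^ t) j, ← Real.rpow_mul (by norm_num : (0:ℝ) ≤ 2)]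
    rw [show t * (j : ℝ) = (m : ℝ) by rw [ht]; field_simp]
    exact Real.rpow_natCast 2 m
  calc (((j + m : ℕ) : ℝ) / (j : ℝ)) ^ j
      = (3 / 2 : ℝ) ^ j * (2 / 3 * (1 + t)) ^ j := by rw [h1, mul_pow]
    _ ≤ (3 / 2 : ℝ) ^ j * ((2 : ℝ) ^ t) ^ j :=
        mul_le_mul_of_nonneg_left (pow_le_pow_left₀ (by positivity) h2 j) (by positivity)
    _ = (3 / 2 : ℝ) ^ j * 2 ^ m := by rw [h3]

/-- Key inequality, packaged. -/
lemma key_pow (j m : ℕ) (hj : 0 < j) (hm : 0 < m) {H : ℝ} (hH : 3 ≤ H) :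
    (H⁻¹) ^ (j + m) * (((j + m : ℕ) : ℝ) / (j : ℝ)) ^ j * (3 / 2 : ℝ) ^ m
      ≤ (1 / 2 : ℝ) ^ j := by
  have hH0 : (0 : ℝ) < H := by linarith
  have hinv : H⁻¹ ≤ (3 : ℝ)⁻¹ := by
    rw [inv_le_inv₀ hH0 (by norm_num : (0:ℝ) < 3)]
    exact hH
  have hstep : (H⁻¹) ^ (j + m) ≤ ((3 : ℝ)⁻¹) ^ (j + m) :=
    pow_le_pow_left₀ (by positivity) hinv _
  have hD : (0 : ℝ) ≤ (((j + m : ℕ) : ℝ) / (j : ℝ)) ^ j := by positivity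
  have e1 : ((3:ℝ)⁻¹) ^ j * (3/2:ℝ) ^ j = (1/2:ℝ) ^ j := by
    rw [← mul_pow]; norm_num
  have e2 : ((3:ℝ)⁻¹) ^ m * ((2:ℝ) ^ m * (3/2:ℝ) ^ m) = 1 := by
    rw [← mul_pow, ← mul_pow]; norm_num
  calc (H⁻¹) ^ (j + m) * (((j + m : ℕ) : ℝ) / (j : ℝ)) ^ j * (3 / 2 : ℝ) ^ m
      ≤ ((3:ℝ)⁻¹) ^ (j + m) * (((j + m : ℕ) : ℝ) / (j : ℝ)) ^ j * (3 / 2 : ℝ) ^ m := by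
        apply mul_le_mul_of_nonneg_right _ (by positivity)
        exact mul_le_mul_of_nonneg_right hstep hD
    _ ≤ ((3:ℝ)⁻¹) ^ (j + m) * ((3 / 2 : ℝ) ^ j * 2 ^ m) * (3 / 2 : ℝ) ^ m := by
        apply mul_le_mul_of_nonneg_right _ (by positivity)
        exact mul_le_mul_of_nonneg_left (key2 j m hj hm) (by positivity)
    _ = (((3:ℝ)⁻¹) ^ j * (3/2:ℝ) ^ j) * (((3:ℝ)⁻¹) ^ m * ((2:ℝ) ^ m * (3/2:ℝ) ^ m)) := by
        rw [pow_add]; ring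
    _ = (1/2:ℝ) ^ j := by rw [e1, e2, mul_one]

/-- Every root of `z^d - h z^j + 1` lies in one of the two annuli (power form). -/
lemma root_annuli (d j : ℕ) (hj : 0 < j) (hjd : j < d) (h : ℂ) (hh : 3 ≤ Complex.abs h)
    (z : ℂ) (hz : z ^ d - h * z ^ j + 1 = 0) :
    (2 / (3 * Complex.abs h) < Complex.abs z ^ j ∧ Complex.abs z ^ j < 2 / Complex.abs h) ∨
    (Complex.abs h / 2 < Complex.abs z ^ (d - j) ∧
      Complex.abs z ^ (d - j) < 3 * Complex.abs h / 2) := by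
  set H : ℝ := Complex.abs h with hH
  have hH3 : (3:ℝ) ≤ H := hh
  have hH0 : (0:ℝ) < H := by linarith
  set r : ℝ := Complex.abs z with hr
  have hz0 : z ≠ 0 := by
    rintro rfl
    simp [zero_pow hj.ne', zero_pow (by omega : d ≠ 0)] at hz
  have hr0 : 0 < r := by
    rw [hr]; exact Complex.abs.pos hz0
  set a : ℝ := r ^ j with ha
  set b : ℝ := r ^ (d - j) with hb
  have ha0 : 0 < a := pow_pos hr0 _
  have hb0 : 0 < b := pow_pos hr0 _
  have hab : a * b = r ^ d := by
    rw [ha, hb, ← pow_add]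
    congr 1
    omega
  -- the three triangle inequalities
  have k1 : h * z ^ j = z ^ d + 1 := by linear_combination -hz
  have k2 : z ^ d = h * z ^ j - 1 := by linear_combination hz
  have k3 : h * z ^ j - z ^ d = 1 := by linear_combination -hz
  have e1 : H * a ≤ a * b + 1 := by
    have : Complex.abs (h * z ^ j) ≤ Complex.abs (z ^ d) + 1 := by
      rw [k1]
      simpa using Complex.abs.add_le (z ^ d) 1
    simpa [map_mul, map_pow, hab, ← hr, ← hH] using this
  have e2 : a * b ≤ H * a + 1 := by
    have : Complex.abs (z ^ d) ≤ Complex.abs (h * z ^ j) + 1 := by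
      rw [k2]
      calc Complex.abs (h * z ^ j - 1) ≤ Complex.abs (h * z ^ j) + Complex.abs 1 :=
            Complex.abs.sub_le_add _ _
        _ = Complex.abs (h * z ^ j) + 1 := by simp
    simpa [map_mul, map_pow, hab, ← hr, ← hH] using this
  have e3 : 1 ≤ H * a + a * b := by
    have : (1:ℝ) ≤ Complex.abs (h * z ^ j) + Complex.abs (z ^ d) := by
      calc (1:ℝ) = Complex.abs (h * z ^ j - z ^ d) := by rw [k3]; simp
        _ ≤ Complex.abs (h * z ^ j) + Complex.abs (z ^ d) := Complex.abs.sub_le_add _ _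
    simpa [map_mul, map_pow, hab, ← hr, ← hH] using this
  rcases lt_trichotomy r 1 with hlt | heq | hgt
  · -- small roots
    left
    have hbl : b < 1 := pow_lt_one₀ hr0.le hlt (by omega)
    have haa : a < 1 := pow_lt_one₀ hr0.le hlt hj.ne'
    have habl : a * b < a * 1 := mul_lt_mul_of_pos_left hbl ha0
    constructor
    · by_contra hcon
      push_neg at hcon
      have hcon' : a * (3 * H) ≤ 2 := (le_div_iff₀ (by positivity)).mp hcon
      nlinarith [mul_nonneg (show (0:ℝ) ≤ H - 3 by linarith) ha0.le]
    · rw [lt_div_iff₀ hH0]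
      nlinarith
  · -- |z| = 1 impossible
    exfalso
    have ha1 : a = 1 := by rw [ha, heq, one_pow]
    have hb1 : b = 1 := by rw [hb, heq, one_pow]
    rw [ha1, hb1] at e1
    linarith
  · -- large roots
    right
    have hal : 1 < a := one_lt_pow₀ hgt hj.ne'
    have hbl : 1 < b := one_lt_pow₀ hgt (by omega)
    constructor
    · by_contra hcon
      push_neg at hcon
      nlinarith [mul_pos (sub_pos.mpr hal) (show (0:ℝ) < H - b by nlinarith)]
    · by_contra hcon
      push_neg at hcon
      nlinarith [mul_pos (sub_pos.mpr hal) (show (0:ℝ) < b - H by nlinarith)]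


/-- Banach fixed point: a solution of `ε = (ω c)^d (1+ε)^{d/j}` with `|ε| ≤ 1/2`. -/
lemma exists_fixed (d j : ℕ) (hj : 0 < j) (hjd : j < d) (h : ℂ) (hh : 3 ≤ Complex.abs h)
    (ω : ℂ) (hω : ω ^ j = 1) (c : ℂ) (hc : c ^ j = h⁻¹) :
    ∃ ε : ℂ, Complex.abs ε ≤ 1 / 2 ∧
      (ω * c) ^ d * (1 + ε) ^ ((d : ℂ) * (j : ℂ)⁻¹) = ε := by
  set H : ℝ := Complex.abs h with hHdef
  have hH3 : (3:ℝ) ≤ H := hh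
  have hH0 : (0:ℝ) < H := by linarith
  have habs_pos : 0 < Complex.abs h := by rw [← hHdef]; linarith
  have hh0 : h ≠ 0 := Complex.abs.pos_iff.mp habs_pos
  set m : ℕ := d - j with hm
  have hm0 : 0 < m := by omega
  have hdjm : d = j + m := by omega
  have habsc : (Complex.abs c) ^ j = H⁻¹ := by
    rw [← map_pow, hc, map_inv₀]
  have habsω : Complex.abs ω = 1 := Complex.norm_eq_one_of_pow_eq_one hω hj.ne'
  set q : ℂ := (d : ℂ) * (j : ℂ)⁻¹ with hqdef
  have hjR : ((j:ℝ)) ≠ 0 := Nat.cast_ne_zero.mpr hj.ne'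
  have hq : q = (((d : ℝ) / (j : ℝ) : ℝ) : ℂ) := by
    rw [hqdef]; push_cast; rw [div_eq_mul_inv]
  have hq1 : q - 1 = (((m : ℝ) / (j : ℝ) : ℝ) : ℂ) := by
    rw [hq]
    have : (m : ℝ) / (j : ℝ) = (d : ℝ) / (j : ℝ) - 1 := by
      rw [hdjm]; push_cast; field_simp; ring
    rw [this]; push_cast; ring
  set A : ℂ := (ω * c) ^ d with hAdef
  have habsA : Complex.abs A = (Complex.abs c) ^ d := by
    rw [hAdef, map_pow, map_mul, habsω, one_mul]
  set G : ℂ → ℂ := fun ε => A * (1 + ε) ^ q with hGdef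
  set s : Set ℂ := Metric.closedBall (0 : ℂ) (1 / 2) with hsdef
  -- basic facts about points of s
  have hmem : ∀ ε : ℂ, ε ∈ s → Complex.abs ε ≤ 1 / 2 := by
    intro ε hε
    rw [hsdef, Metric.mem_closedBall, dist_zero_right] at hε
    exact hε
  have hw_lb : ∀ ε : ℂ, ε ∈ s → 1 / 2 ≤ Complex.abs (1 + ε) := by
    intro ε hε
    have h1 : (1:ℝ) = Complex.abs ((1 + ε) - ε) := by norm_num
    have h2 : Complex.abs ((1 + ε) - ε) ≤ Complex.abs (1 + ε) + Complex.abs ε :=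
      Complex.abs.sub_le_add _ _
    have := hmem ε hε
    linarith
  have hw_ub : ∀ ε : ℂ, ε ∈ s → Complex.abs (1 + ε) ≤ 3 / 2 := by
    intro ε hε
    have h2 : Complex.abs (1 + ε) ≤ Complex.abs 1 + Complex.abs ε := Complex.abs.add_le _ _
    have := hmem ε hε
    simp only [map_one] at h2
    linarith
  have hw_ne : ∀ ε : ℂ, ε ∈ s → (1 + ε) ≠ 0 := by
    intro ε hε h0
    have := hw_lb ε hε
    rw [h0] at this
    simp at this
    linarith
  have hw_slit : ∀ ε : ℂ, ε ∈ s → (1 + ε) ∈ Complex.slitPlane := by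
    intro ε hε
    rw [Complex.mem_slitPlane_iff]
    left
    have h1 : |ε.re| ≤ Complex.abs ε := Complex.abs_re_le_abs ε
    have h2 := hmem ε hε
    have : -(1/2 : ℝ) ≤ ε.re := by
      have := neg_abs_le ε.re
      linarith
    simp only [Complex.add_re, Complex.one_re]
    linarith
  -- absolute value of G
  have habsG : ∀ ε : ℂ, ε ∈ s →
      Complex.abs (G ε) = (Complex.abs c) ^ d * (Complex.abs (1 + ε)) ^ ((d : ℝ) / (j : ℝ)) := by
    intro ε hε
    rw [hGdef]
    simp only [map_mul, habsA]
    congr 1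
    rw [hq]
    exact Complex.abs_cpow_real _ _
  -- G maps s to s
  have hmaps : Set.MapsTo G s s := by
    intro ε hε
    rw [hsdef, Metric.mem_closedBall, dist_zero_right]
    rw [Complex.norm_eq_abs, habsG ε hε]
    -- bound: |c|^d * |1+ε|^{d/j} ≤ |c|^d * (3/2)^{d/j} ≤ 1/2
    have hb1 : (Complex.abs (1 + ε)) ^ ((d : ℝ) / (j : ℝ)) ≤ (3/2 : ℝ) ^ ((d : ℝ) / (j : ℝ)) :=
      Real.rpow_le_rpow (Complex.abs.nonneg _) (hw_ub ε hε) (by positivity)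
    have hb2 : (Complex.abs c) ^ d * (3/2 : ℝ) ^ ((d : ℝ) / (j : ℝ)) ≤ 1/2 := by
      have hXnn : (0:ℝ) ≤ (Complex.abs c) ^ d * (3/2 : ℝ) ^ ((d : ℝ) / (j : ℝ)) := by positivity
      refine le_of_pow_le_pow_left₀ hj.ne' (by norm_num) ?_
      have hpow : ((Complex.abs c) ^ d * (3/2 : ℝ) ^ ((d : ℝ) / (j : ℝ))) ^ j
          = ((H⁻¹) ^ d) * (3/2 : ℝ) ^ d := by
        rw [mul_pow]
        congr 1
        · rw [← pow_mul, mul_comm d j, pow_mul, habsc]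
        · rw [← Real.rpow_natCast ((3/2 : ℝ) ^ ((d : ℝ) / (j : ℝ))) j,
            ← Real.rpow_mul (by norm_num : (0:ℝ) ≤ 3/2)]
          rw [show (d : ℝ) / (j : ℝ) * (j : ℝ) = (d : ℝ) by field_simp]
          exact Real.rpow_natCast _ _
      rw [hpow]
      have h1 : ((H⁻¹) ^ d) * (3/2 : ℝ) ^ d = (3 / (2 * H)) ^ d := by
        rw [← mul_pow]
        congr 1
        field_simp
      rw [h1]
      have h2 : (3 / (2 * H) : ℝ) ≤ 1 / 2 := by
        rw [div_le_div_iff₀ (by positivity) (by norm_num)]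
        linarith
      calc (3 / (2 * H) : ℝ) ^ d ≤ (1/2 : ℝ) ^ d :=
            pow_le_pow_left₀ (by positivity) h2 d
        _ ≤ (1/2 : ℝ) ^ j := pow_le_pow_of_le_one (by norm_num) (by norm_num) hjd.le
    calc (Complex.abs c) ^ d * (Complex.abs (1 + ε)) ^ ((d : ℝ) / (j : ℝ))
        ≤ (Complex.abs c) ^ d * (3/2 : ℝ) ^ ((d : ℝ) / (j : ℝ)) :=
          mul_le_mul_of_nonneg_left hb1 (by positivity)
      _ ≤ 1/2 := hb2
  -- G is Lipschitz on s with constant 1/2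
  have hlip : LipschitzOnWith (1/2 : NNReal) G s := by
    apply Convex.lipschitzOnWith_of_nnnorm_hasDerivWithin_le
      (f' := fun ε => A * (q * (1 + ε) ^ (q - 1) * 1)) (convex_closedBall _ _)
    · intro ε hε
      have hd1 : HasDerivAt (fun ε : ℂ => 1 + ε) 1 ε := by
        simpa using (hasDerivAt_id ε).const_add (1 : ℂ)
      have hd2 : HasDerivAt (fun ε : ℂ => (1 + ε) ^ q) (q * (1 + ε) ^ (q - 1) * 1) ε :=
        hd1.cpow_const (hw_slit ε hε)
      exact ((hd2.const_mul A)).hasDerivWithinAt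
    · intro ε hε
      rw [← NNReal.coe_le_coe, coe_nnnorm]
      push_cast
      rw [Complex.norm_eq_abs]
      simp only [map_mul, mul_one, habsA]
      have habsq : Complex.abs q = (d : ℝ) / (j : ℝ) := by
        rw [hq, Complex.abs_ofReal, abs_of_nonneg (by positivity)]
      have habsw : Complex.abs ((1 + ε) ^ (q - 1)) = (Complex.abs (1 + ε)) ^ ((m : ℝ) / (j : ℝ)) := by
        rw [hq1]
        exact Complex.abs_cpow_real _ _
      rw [habsq, habsw]
      have hb1 : (Complex.abs (1 + ε)) ^ ((m : ℝ) / (j : ℝ)) ≤ (3/2 : ℝ) ^ ((m : ℝ) / (j : ℝ)) :=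
        Real.rpow_le_rpow (Complex.abs.nonneg _) (hw_ub ε hε) (by positivity)
      have hB : (Complex.abs c) ^ d * ((d : ℝ) / (j : ℝ) * (3/2 : ℝ) ^ ((m : ℝ) / (j : ℝ))) ≤ 1/2 := by
        refine le_of_pow_le_pow_left₀ hj.ne' (by norm_num) ?_
        have hpow : ((Complex.abs c) ^ d * ((d : ℝ) / (j : ℝ) * (3/2 : ℝ) ^ ((m : ℝ) / (j : ℝ)))) ^ j
            = (H⁻¹) ^ d * ((d : ℝ) / (j : ℝ)) ^ j * (3/2 : ℝ) ^ m := by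
          rw [mul_pow, mul_pow]
          have e1 : ((Complex.abs c) ^ d) ^ j = (H⁻¹) ^ d := by
            rw [← pow_mul, mul_comm d j, pow_mul, habsc]
          have e2 : ((3/2 : ℝ) ^ ((m : ℝ) / (j : ℝ))) ^ j = (3/2 : ℝ) ^ m := by
            rw [← Real.rpow_natCast ((3/2 : ℝ) ^ ((m : ℝ) / (j : ℝ))) j,
              ← Real.rpow_mul (by norm_num : (0:ℝ) ≤ 3/2)]
            rw [show (m : ℝ) / (j : ℝ) * (j : ℝ) = (m : ℝ) by field_simp]
            exact Real.rpow_natCast _ _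
          rw [e1, e2]
          ring
        rw [hpow]
        have := key_pow j m hj hm0 hH3
        rw [← hdjm] at this
        exact this
      calc (Complex.abs c) ^ d * ((d : ℝ) / (j : ℝ) * (Complex.abs (1 + ε)) ^ ((m : ℝ) / (j : ℝ)))
          ≤ (Complex.abs c) ^ d * ((d : ℝ) / (j : ℝ) * (3/2 : ℝ) ^ ((m : ℝ) / (j : ℝ))) := by
            apply mul_le_mul_of_nonneg_left _ (by positivity)
            exact mul_le_mul_of_nonneg_left hb1 (by positivity)
        _ ≤ 1/2 := hB
  -- apply Banach fixed point theorem
  have hcontr : ContractingWith (1/2 : NNReal) (hmaps.restrict G s s) := by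
    constructor
    · rw [← NNReal.coe_lt_coe]
      norm_num
    · exact hlip.mapsToRestrict hmaps
  have hs_complete : IsComplete s := (Metric.isClosed_closedBall).isComplete
  have h0s : (0 : ℂ) ∈ s := by
    rw [hsdef, Metric.mem_closedBall, dist_self]
    norm_num
  obtain ⟨ε, hεs, hfix, -, -⟩ := hcontr.exists_fixedPoint' hs_complete hmaps h0s (edist_ne_top _ _)
  exact ⟨ε, hmem ε hεs, hfix⟩


/-- There are at least `j` distinct roots of small modulus. -/
lemma exists_small_roots (d j : ℕ) (hj : 0 < j) (hjd : j < d) (h : ℂ)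
    (hh : 3 ≤ Complex.abs h) :
    ∃ S : Finset ℂ, S.card = j ∧ ∀ z ∈ S, z ^ d - h * z ^ j + 1 = 0 ∧
      Complex.abs z ^ j ≤ 3 / (2 * Complex.abs h) := by
  set H : ℝ := Complex.abs h with hHdef
  have hH3 : (3:ℝ) ≤ H := hh
  have hH0 : (0:ℝ) < H := by linarith
  have habs_pos : 0 < Complex.abs h := by rw [← hHdef]; linarith
  have hh0 : h ≠ 0 := Complex.abs.pos_iff.mp habs_pos
  -- a j-th root of h⁻¹
  set c : ℂ := h⁻¹ ^ ((j : ℂ)⁻¹) with hcdef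
  have hc : c ^ j = h⁻¹ := Complex.cpow_nat_inv_pow _ hj.ne'
  have hc0 : c ≠ 0 := by
    intro h0
    rw [h0, zero_pow hj.ne'] at hc
    exact hh0 (by simpa using hc.symm)
  set T : Finset ℂ := Polynomial.nthRootsFinset j (1 : ℂ) with hTdef
  have hTcard : T.card = j :=
    (Complex.isPrimitiveRoot_exp j hj.ne').card_nthRootsFinset
  -- for each ω in T we get a root
  have hex : ∀ ω ∈ T, ∃ z : ℂ, Complex.abs (z ^ d) ≤ 1/2 ∧
      z = ω * c * (1 + z ^ d) ^ ((j : ℂ)⁻¹) := by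
    intro ω hωT
    have hω : ω ^ j = 1 := (Polynomial.mem_nthRootsFinset hj 1).mp hωT
    obtain ⟨ε, hε, hfix⟩ := exists_fixed d j hj hjd h hh ω hω c hc
    refine ⟨ω * c * (1 + ε) ^ ((j : ℂ)⁻¹), ?_, ?_⟩ <;>
    · have hzd : (ω * c * (1 + ε) ^ ((j : ℂ)⁻¹)) ^ d = ε := by
        rw [mul_pow, ← Complex.cpow_nat_mul, hfix]
      rw [hzd]
      try exact hε
      try rfl
  choose F hF1 hF2 using hex
  set S : Finset ℂ := T.attach.image (fun x => F x.1 x.2) with hSdef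
  -- injectivity
  have hinj : ∀ (x : {a // a ∈ T}) (y : {a // a ∈ T}),
      F x.1 x.2 = F y.1 y.2 → x = y := by
    intro x y hxy
    have hx := hF2 x.1 x.2
    have hy := hF2 y.1 y.2
    rw [hxy] at hx
    set z := F y.1 y.2 with hz
    have hne : c * (1 + z ^ d) ^ ((j : ℂ)⁻¹) ≠ 0 := by
      apply mul_ne_zero hc0
      rw [Ne, Complex.cpow_eq_zero_iff]
      push_neg
      intro h0
      exfalso
      have h1 := hF1 y.1 y.2
      rw [← hz] at h1
      have hzd : z ^ d = -1 := by linear_combination h0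
      rw [hzd] at h1
      simp at h1
      norm_num at h1
    have : x.1 * (c * (1 + z ^ d) ^ ((j : ℂ)⁻¹)) = y.1 * (c * (1 + z ^ d) ^ ((j : ℂ)⁻¹)) := by
      rw [← mul_assoc, ← mul_assoc, ← hx, ← hy]
    exact Subtype.ext (mul_right_cancel₀ hne this)
  have hScard : S.card = j := by
    rw [hSdef, Finset.card_image_of_injective _ fun x y => hinj x y, Finset.card_attach, hTcard]
  refine ⟨S, hScard, ?_⟩
  intro z hzS
  rw [hSdef, Finset.mem_image] at hzS
  obtain ⟨⟨ω, hωT⟩, -, hFz⟩ := hzS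
  have hω : ω ^ j = 1 := (Polynomial.mem_nthRootsFinset hj 1).mp hωT
  have hzeq : z = ω * c * (1 + z ^ d) ^ ((j : ℂ)⁻¹) := by
    rw [← hFz]
    exact hF2 ω hωT
  have habs : Complex.abs (z ^ d) ≤ 1/2 := by
    rw [← hFz]
    exact hF1 ω hωT
  -- z^j = h⁻¹ * (1 + z^d)
  have hzj : z ^ j = h⁻¹ * (1 + z ^ d) := by
    conv_lhs => rw [hzeq]
    rw [mul_pow, mul_pow, hω, one_mul, hc, Complex.cpow_nat_inv_pow _ hj.ne']
  have hroot : z ^ d - h * z ^ j + 1 = 0 := by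
    have : h * z ^ j = 1 + z ^ d := by
      rw [hzj, ← mul_assoc, mul_inv_cancel₀ hh0, one_mul]
    linear_combination -this
  refine ⟨hroot, ?_⟩
  have : Complex.abs z ^ j = H⁻¹ * Complex.abs (1 + z ^ d) := by
    rw [← map_pow, hzj, map_mul, map_inv₀, hHdef]
  rw [this]
  have hub : Complex.abs (1 + z ^ d) ≤ 3/2 := by
    calc Complex.abs (1 + z ^ d) ≤ Complex.abs 1 + Complex.abs (z ^ d) := Complex.abs.add_le _ _
      _ ≤ 1 + 1/2 := by
          simp only [map_one]
          linarith
      _ = 3/2 := by norm_num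
  calc H⁻¹ * Complex.abs (1 + z ^ d) ≤ H⁻¹ * (3/2) := by
        apply mul_le_mul_of_nonneg_left hub (by positivity)
    _ = 3 / (2 * H) := by field_simp
    _ = 3 / (2 * Complex.abs h) := by rw [hHdef]

/-- There are at least `d - j` distinct roots of large modulus. -/
lemma exists_large_roots (d j : ℕ) (hj : 0 < j) (hjd : j < d) (h : ℂ)
    (hh : 3 ≤ Complex.abs h) :
    ∃ S : Finset ℂ, S.card = d - j ∧ ∀ z ∈ S, z ^ d - h * z ^ j + 1 = 0 ∧
      2 * Complex.abs h / 3 ≤ Complex.abs z ^ (d - j) := by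
  have hb0 : 0 < d - j := by omega
  have hbd : d - j < d := by omega
  obtain ⟨S₀, hS₀card, hS₀⟩ := exists_small_roots d (d - j) hb0 hbd h hh
  have hH0 : (0:ℝ) < Complex.abs h := by linarith
  -- all members of S₀ are nonzero
  have hne : ∀ w ∈ S₀, w ≠ 0 := by
    intro w hw hw0
    have := (hS₀ w hw).1
    rw [hw0] at this
    simp [zero_pow (by omega : d ≠ 0), zero_pow hb0.ne'] at this
  refine ⟨S₀.image (·⁻¹), ?_, ?_⟩
  · rw [Finset.card_image_of_injective _ inv_injective, hS₀card]
  · intro z hz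
    rw [Finset.mem_image] at hz
    obtain ⟨w, hwS, rfl⟩ := hz
    obtain ⟨hweq, hwabs⟩ := hS₀ w hwS
    have hw0 : w ≠ 0 := hne w hwS
    have hwz : w * w⁻¹ = 1 := mul_inv_cancel₀ hw0
    constructor
    · -- w⁻¹ is a root of the original polynomial
      have e1 : w ^ d * (w⁻¹) ^ d = 1 := by rw [← mul_pow, hwz, one_pow]
      have e2 : w ^ d * (w⁻¹) ^ j = w ^ (d - j) := by
        have hd : d = (d - j) + j := by omega
        calc w ^ d * (w⁻¹) ^ j = w ^ ((d-j) + j) * (w⁻¹) ^ j := by rw [← hd]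
          _ = w ^ (d-j) * (w ^ j * (w⁻¹) ^ j) := by rw [pow_add]; ring
          _ = w ^ (d-j) * 1 := by rw [← mul_pow, hwz, one_pow]
          _ = w ^ (d-j) := mul_one _
      have key : w ^ d * ((w⁻¹) ^ d - h * (w⁻¹) ^ j + 1) = w ^ d - h * w ^ (d - j) + 1 := by
        calc w ^ d * ((w⁻¹) ^ d - h * (w⁻¹) ^ j + 1)
            = (w ^ d * (w⁻¹) ^ d) - h * (w ^ d * (w⁻¹) ^ j) + w ^ d := by ring
          _ = 1 - h * w ^ (d - j) + w ^ d := by rw [e1, e2]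
          _ = w ^ d - h * w ^ (d - j) + 1 := by ring
      have : w ^ d * ((w⁻¹) ^ d - h * (w⁻¹) ^ j + 1) = 0 := by rw [key, hweq]
      exact (mul_eq_zero.mp this).resolve_left (pow_ne_zero _ hw0)
    · -- modulus bound
      have hwpos : 0 < Complex.abs w ^ (d - j) := pow_pos (Complex.abs.pos hw0) _
      have : (3 / (2 * Complex.abs h))⁻¹ ≤ (Complex.abs w ^ (d - j))⁻¹ := by
        apply inv_anti₀ hwpos hwabs
      calc 2 * Complex.abs h / 3 = (3 / (2 * Complex.abs h))⁻¹ := by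
            rw [inv_div]
        _ ≤ (Complex.abs w ^ (d - j))⁻¹ := this
        _ = Complex.abs (w⁻¹) ^ (d - j) := by rw [map_inv₀, inv_pow]


/-- rpow/pow conversion. -/
lemma rpow_inv_lt_iff {cst x : ℝ} (hc : 0 ≤ cst) (hx : 0 ≤ x) {n : ℕ} (hn : n ≠ 0) :
    cst ^ ((n : ℝ)⁻¹) < x ↔ cst < x ^ n := by
  have key : (cst ^ ((n : ℝ)⁻¹)) ^ n = cst := Real.rpow_inv_natCast_pow hc hn
  constructor
  · intro hlt
    calc cst = (cst ^ ((n : ℝ)⁻¹)) ^ n := key.symm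
      _ < x ^ n := pow_lt_pow_left₀ hlt (Real.rpow_nonneg hc _) hn
  · intro hlt
    by_contra hcon
    push_neg at hcon
    have : x ^ n ≤ (cst ^ ((n : ℝ)⁻¹)) ^ n := pow_le_pow_left₀ hx hcon n
    rw [key] at this
    linarith
lemma lt_rpow_inv_iff {cst x : ℝ} (hc : 0 ≤ cst) (hx : 0 ≤ x) {n : ℕ} (hn : n ≠ 0) :
    x < cst ^ ((n : ℝ)⁻¹) ↔ x ^ n < cst := by
  have key : (cst ^ ((n : ℝ)⁻¹)) ^ n = cst := Real.rpow_inv_natCast_pow hc hn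
  constructor
  · intro hlt
    calc x ^ n < (cst ^ ((n : ℝ)⁻¹)) ^ n := pow_lt_pow_left₀ hlt hx hn
      _ = cst := key
  · intro hlt
    by_contra hcon
    push_neg at hcon
    have : (cst ^ ((n : ℝ)⁻¹)) ^ n ≤ x ^ n := pow_le_pow_left₀ (Real.rpow_nonneg hc _) hcon n
    rw [key] at this
    linarith


end TrinomialAux

open Polynomial in
theorem trinomial_roots_annuli_concrete (d j : ℕ) (h : ℤ) (hj : 0 < j) (hjd : j < d)
    (hh : 3 ≤ |h|) :
    Multiset.card ((X ^ d - C (h : ℂ) * X ^ j + 1 : Polynomial ℂ).roots.filter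
        (fun z => (2 / (3 * |(h : ℝ)|)) ^ ((j : ℝ)⁻¹) < ‖z‖ ∧
          ‖z‖ < (2 / |(h : ℝ)|) ^ ((j : ℝ)⁻¹))) = j ∧
    Multiset.card ((X ^ d - C (h : ℂ) * X ^ j + 1 : Polynomial ℂ).roots.filter
        (fun z => (|(h : ℝ)| / 2) ^ (((d : ℝ) - (j : ℝ))⁻¹) < ‖z‖ ∧
          ‖z‖ < (3 * |(h : ℝ)| / 2) ^ (((d : ℝ) - (j : ℝ))⁻¹))) = d - j := by
  classical
  set H : ℝ := |(h : ℝ)| with hHdef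
  have hH3 : (3 : ℝ) ≤ H := by
    rw [hHdef, ← Int.cast_abs]
    exact_mod_cast hh
  have hH0 : (0 : ℝ) < H := by linarith
  have hch : Complex.abs ((h : ℤ) : ℂ) = H := by
    rw [hHdef]
    rw [show ((h : ℤ) : ℂ) = (((h : ℝ) : ℝ) : ℂ) by push_cast; ring]
    exact Complex.abs_ofReal _
  have hhabs : 3 ≤ Complex.abs ((h : ℤ) : ℂ) := by rw [hch]; exact hH3
  set p : Polynomial ℂ := X ^ d - C (h : ℂ) * X ^ j + 1 with hpdef
  have hd0 : d ≠ 0 := by omega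
  -- p is monic of degree d
  have hpm : p.Monic := by
    rw [hpdef]
    have h1 : (X ^ d - C ((h : ℤ) : ℂ) * X ^ j + 1 : Polynomial ℂ)
        = X ^ d + (1 - C ((h : ℤ) : ℂ) * X ^ j) := by ring
    rw [h1]
    apply Polynomial.monic_X_pow_add
    apply lt_of_le_of_lt (Polynomial.degree_sub_le _ _)
    rw [max_lt_iff]
    constructor
    · apply lt_of_le_of_lt Polynomial.degree_one_le
      exact_mod_cast WithBot.coe_lt_coe.mpr (by omega : 0 < d)
    · apply lt_of_le_of_lt (Polynomial.degree_C_mul_X_pow_le _ _)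
      exact_mod_cast WithBot.coe_lt_coe.mpr hjd
  have hp0 : p ≠ 0 := hpm.ne_zero
  have hdeg : p.natDegree = d := by
    rw [hpdef]
    have h1 : (X ^ d - C ((h : ℤ) : ℂ) * X ^ j + 1 : Polynomial ℂ)
        = X ^ d + (1 - C ((h : ℤ) : ℂ) * X ^ j) := by ring
    rw [h1]
    compute_degree!
    all_goals first
      | omega
      | (rw [if_neg (by omega : ¬ d = 0), if_neg (by omega : ¬ d = j)]; norm_num)
  have hcard : Multiset.card p.roots = d := by
    rw [← hdeg]
    exact Polynomial.splits_iff_card_roots.mp (IsAlgClosed.splits p)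
  have heval : ∀ z : ℂ, p.IsRoot z ↔ z ^ d - ((h : ℤ) : ℂ) * z ^ j + 1 = 0 := by
    intro z
    rw [Polynomial.IsRoot, hpdef]
    simp [Polynomial.eval_pow]
  have hmem : ∀ z : ℂ, z ∈ p.roots ↔ z ^ d - ((h : ℤ) : ℂ) * z ^ j + 1 = 0 := by
    intro z
    rw [Polynomial.mem_roots hp0]
    exact heval z
  -- predicates
  set PA : ℂ → Prop := fun z => (2 / (3 * H)) ^ ((j : ℝ)⁻¹) < Complex.abs z ∧
      Complex.abs z < (2 / H) ^ ((j : ℝ)⁻¹) with hPAdef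
  set PB : ℂ → Prop := fun z => (H / 2) ^ (((d : ℝ) - (j : ℝ))⁻¹) < Complex.abs z ∧
      Complex.abs z < (3 * H / 2) ^ (((d : ℝ) - (j : ℝ))⁻¹) with hPBdef
  have hdj_cast : (d : ℝ) - (j : ℝ) = ((d - j : ℕ) : ℝ) := by
    rw [Nat.cast_sub hjd.le]
  have hdj0 : d - j ≠ 0 := by omega
  -- pow characterizations
  have hPA_iff : ∀ z : ℂ, PA z ↔
      (2 / (3 * H) < Complex.abs z ^ j ∧ Complex.abs z ^ j < 2 / H) := by
    intro z
    rw [hPAdef]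
    constructor
    · rintro ⟨h1, h2⟩
      exact ⟨(TrinomialAux.rpow_inv_lt_iff (by positivity) (Complex.abs.nonneg z) hj.ne').mp h1,
        (TrinomialAux.lt_rpow_inv_iff (by positivity) (Complex.abs.nonneg z) hj.ne').mp h2⟩
    · rintro ⟨h1, h2⟩
      exact ⟨(TrinomialAux.rpow_inv_lt_iff (by positivity) (Complex.abs.nonneg z) hj.ne').mpr h1,
        (TrinomialAux.lt_rpow_inv_iff (by positivity) (Complex.abs.nonneg z) hj.ne').mpr h2⟩
  have hPB_iff : ∀ z : ℂ, PB z ↔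
      (H / 2 < Complex.abs z ^ (d - j) ∧ Complex.abs z ^ (d - j) < 3 * H / 2) := by
    intro z
    rw [hPBdef]
    simp only [hdj_cast]
    constructor
    · rintro ⟨h1, h2⟩
      exact ⟨(TrinomialAux.rpow_inv_lt_iff (by positivity) (Complex.abs.nonneg z) hdj0).mp h1,
        (TrinomialAux.lt_rpow_inv_iff (by positivity) (Complex.abs.nonneg z) hdj0).mp h2⟩
    · rintro ⟨h1, h2⟩
      exact ⟨(TrinomialAux.rpow_inv_lt_iff (by positivity) (Complex.abs.nonneg z) hdj0).mpr h1,
        (TrinomialAux.lt_rpow_inv_iff (by positivity) (Complex.abs.nonneg z) hdj0).mpr h2⟩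
  -- every root satisfies PA or PB
  have hall : ∀ z ∈ p.roots, PA z ∨ PB z := by
    intro z hz
    have hroot := (hmem z).mp hz
    have := TrinomialAux.root_annuli d j hj hjd _ hhabs z hroot
    rw [hch] at this
    rcases this with hA | hB
    · left; exact (hPA_iff z).mpr hA
    · right; exact (hPB_iff z).mpr hB
  -- PA and PB are incompatible
  have hdisj : ∀ z : ℂ, ¬(PA z ∧ PB z) := by
    rintro z ⟨hA, hB⟩
    rw [hPA_iff] at hA
    rw [hPB_iff] at hB
    have h1 : Complex.abs z ^ j < 1 := by
      calc Complex.abs z ^ j < 2 / H := hA.2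
        _ ≤ 2 / 3 := by
            rw [div_le_div_iff₀ hH0 (by norm_num)]
            linarith
        _ < 1 := by norm_num
    have h2 : 1 < Complex.abs z ^ (d - j) := by
      calc (1:ℝ) < H / 2 := by linarith
        _ < Complex.abs z ^ (d - j) := hB.1
    have hzlt : Complex.abs z < 1 := by
      by_contra hcon
      push_neg at hcon
      have h3 : (1:ℝ) ≤ Complex.abs z ^ j := one_le_pow₀ hcon
      linarith
    have : Complex.abs z ^ (d - j) < 1 := pow_lt_one₀ (Complex.abs.nonneg z) hzlt hdj0
    linarith
  -- small roots give PA, large roots give PB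
  obtain ⟨SA, hSAcard, hSA⟩ := TrinomialAux.exists_small_roots d j hj hjd _ hhabs
  obtain ⟨SB, hSBcard, hSB⟩ := TrinomialAux.exists_large_roots d j hj hjd _ hhabs
  have hSA_PA : ∀ z ∈ SA, z ∈ p.roots ∧ PA z := by
    intro z hzS
    obtain ⟨hroot, habs⟩ := hSA z hzS
    have hzr : z ∈ p.roots := (hmem z).mpr hroot
    refine ⟨hzr, ?_⟩
    rcases hall z hzr with hA | hB
    · exact hA
    · exfalso
      rw [hPB_iff] at hB
      rw [hch] at habs
      have h1 : Complex.abs z ^ j ≤ 1/2 := by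
        calc Complex.abs z ^ j ≤ 3 / (2 * H) := habs
          _ ≤ 1/2 := by
              rw [div_le_div_iff₀ (by positivity) (by norm_num)]
              linarith
      have hzlt : Complex.abs z < 1 := by
        by_contra hcon
        push_neg at hcon
        have h2 : (1:ℝ) ≤ Complex.abs z ^ j := one_le_pow₀ hcon
        linarith
      have h3 : Complex.abs z ^ (d - j) < 1 := pow_lt_one₀ (Complex.abs.nonneg z) hzlt hdj0
      have h4 : H / 2 < Complex.abs z ^ (d - j) := hB.1
      linarith
  have hSB_PB : ∀ z ∈ SB, z ∈ p.roots ∧ PB z := by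
    intro z hzS
    obtain ⟨hroot, habs⟩ := hSB z hzS
    have hzr : z ∈ p.roots := (hmem z).mpr hroot
    refine ⟨hzr, ?_⟩
    rcases hall z hzr with hA | hB
    · exfalso
      rw [hPA_iff] at hA
      rw [hch] at habs
      have h1 : (2:ℝ) ≤ Complex.abs z ^ (d - j) := by
        calc (2:ℝ) ≤ 2 * H / 3 := by
              rw [le_div_iff₀ (by norm_num)]
              linarith
          _ ≤ Complex.abs z ^ (d - j) := habs
      have hzgt : 1 < Complex.abs z := by
        by_contra hcon
        push_neg at hcon
        have h2 : Complex.abs z ^ (d - j) ≤ 1 := pow_le_one₀ (Complex.abs.nonneg z) hcon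
        linarith
      have h3 : 1 < Complex.abs z ^ j := one_lt_pow₀ hzgt hj.ne'
      have h4 : Complex.abs z ^ j < 2 / H := hA.2
      have : (2:ℝ)/H ≤ 2/3 := by
        rw [div_le_div_iff₀ hH0 (by norm_num)]
        linarith
      linarith
    · exact hB
  -- counting
  have hcount : Multiset.card (p.roots.filter PA) + Multiset.card (p.roots.filter PB) = d := by
    have hfilter := Multiset.filter_add_filter PA PB p.roots
    have h1 : p.roots.filter (fun a => PA a ∨ PB a) = p.roots :=
      Multiset.filter_eq_self.mpr hall
    have h2 : p.roots.filter (fun a => PA a ∧ PB a) = 0 :=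
      Multiset.filter_eq_nil.mpr (fun a _ => hdisj a)
    have := congrArg Multiset.card hfilter
    rw [Multiset.card_add, h1, h2] at this
    simpa [hcard] using this
  have hcA : j ≤ Multiset.card (p.roots.filter PA) := by
    have hsub : SA ⊆ (p.roots.filter PA).toFinset := by
      intro z hzS
      rw [Multiset.mem_toFinset, Multiset.mem_filter]
      exact hSA_PA z hzS
    calc j = SA.card := hSAcard.symm
      _ ≤ (p.roots.filter PA).toFinset.card := Finset.card_le_card hsub
      _ ≤ Multiset.card (p.roots.filter PA) := Multiset.toFinset_card_le _
  have hcB : d - j ≤ Multiset.card (p.roots.filter PB) := by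
    have hsub : SB ⊆ (p.roots.filter PB).toFinset := by
      intro z hzS
      rw [Multiset.mem_toFinset, Multiset.mem_filter]
      exact hSB_PB z hzS
    calc d - j = SB.card := hSBcard.symm
      _ ≤ (p.roots.filter PB).toFinset.card := Finset.card_le_card hsub
      _ ≤ Multiset.card (p.roots.filter PB) := Multiset.toFinset_card_le _
  have hAval : Multiset.card (p.roots.filter PA) = j := by omega
  have hBval : Multiset.card (p.roots.filter PB) = d - j := by omega
  constructor
  · convert hAval using 3 <;> exact Iff.rfl
  · convert hBval using 3 <;> exact Iff.rfl
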